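/- Let G₁ ~ Exponential(1) and G₂ ~ Gamma(D,1) be independent, with D > 0, and let P, α, θ > 0. Define M = G₁/(Pθ G₂ + 1) and Γ = Pα M. Then the CDF of Γ is F(x) = 1 - e^{-x/(Pα)}/((θ/α)x + 1)^D for x ≥ 0. -/

import Mathlib

open MeasureTheory ProbabilityTheory Real Set

/-- Closed-form SINR CDF of the common stream: for independent `G₁ ~ Exp(1)` and
`G₂ ~ Gamma(D,1)`, `M = G₁/(PθG₂+1)` and `Γ = PαM`, the CDF of `Γ` is
`F(x) = 1 - e^{-x/(Pα)}/((θ/α)x+1)^D` for `x ≥ 0`. -/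
theorem sinr_cdf_common_stream
    {Ω : Type*} [MeasureSpace Ω] (μ : Measure Ω) [IsProbabilityMeasure μ]
    (G₁ G₂ : Ω → ℝ) (hG₁ : Measurable G₁) (hG₂ : Measurable G₂)
    (hindep : IndepFun G₁ G₂ μ)
    (hdist₁ : μ.map G₁ = expMeasure 1)
    (D : ℝ) (hD : 0 < D) (hdist₂ : μ.map G₂ = gammaMeasure D 1)
    (P α θ : ℝ) (hP : 0 < P) (hα : 0 < α) (hθ : 0 < θ) :
    ∀ x : ℝ, 0 ≤ x →
      (μ {ω | P * α * (G₁ ω / (P * θ * G₂ ω + 1)) ≤ x}).toReal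
        = 1 - Real.exp (-(x / (P * α))) / ((θ / α) * x + 1) ^ D := by
  intro x hx
  have hPα : (0:ℝ) < P * α := by positivity
  set c : ℝ := x / (P * α) with hc
  have hc0 : 0 ≤ c := by positivity
  have h1s : (0:ℝ) < 1 + c * (P * θ) := by positivity
  haveI : IsProbabilityMeasure (gammaMeasure D 1) := isProbabilityMeasure_gammaMeasure hD one_pos
  haveI : IsProbabilityMeasure (expMeasure 1) := isProbabilityMeasure_expMeasure one_pos
  -- the gamma measure gives no mass to negatives
  have hγIio : gammaMeasure D 1 (Iio 0) = 0 := by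
    rw [gammaMeasure, withDensity_apply _ measurableSet_Iio,
      lintegral_gammaPDF_of_nonpos le_rfl]
  have hγae : ∀ᵐ y ∂(gammaMeasure D 1), 0 ≤ y := by
    rw [ae_iff]
    have h : {y : ℝ | ¬ 0 ≤ y} = Iio 0 := by ext y; simp [not_le]
    rw [h, hγIio]
  have hG₂ae : ∀ᵐ ω ∂μ, 0 ≤ G₂ ω := by
    rw [ae_iff]
    have h : {ω | ¬ 0 ≤ G₂ ω} = G₂ ⁻¹' (Iio 0) := by ext ω; simp [not_le]
    rw [h, ← Measure.map_apply hG₂ measurableSet_Iio, hdist₂, hγIio]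
  -- rewrite the event
  have hsetae : {ω | P * α * (G₁ ω / (P * θ * G₂ ω + 1)) ≤ x}
      =ᵐ[μ] {ω | G₁ ω ≤ c * (P * θ * G₂ ω + 1)} := by
    apply Filter.eventuallyEq_set.mpr
    filter_upwards [hG₂ae] with ω hω
    have hd : (0:ℝ) < P * θ * G₂ ω + 1 := by positivity
    show P * α * (G₁ ω / (P * θ * G₂ ω + 1)) ≤ x ↔ G₁ ω ≤ c * (P * θ * G₂ ω + 1)
    rw [← mul_div_assoc, div_le_iff₀ hd, hc, div_mul_eq_mul_div, le_div_iff₀ hPα]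
    constructor <;> intro h <;> nlinarith
  rw [measure_congr hsetae]
  -- express via the joint (product) law
  have hS : MeasurableSet {p : ℝ × ℝ | p.2 ≤ c * (P * θ * p.1 + 1)} :=
    measurableSet_le measurable_snd (by fun_prop)
  have hmap : μ.map (fun ω => (G₂ ω, G₁ ω)) = (μ.map G₂).prod (μ.map G₁) :=
    (indepFun_iff_map_prod_eq_prod_map_map hG₂.aemeasurable hG₁.aemeasurable).mp hindep.symm
  have hμB : μ {ω | G₁ ω ≤ c * (P * θ * G₂ ω + 1)}
      = ∫⁻ y, expMeasure 1 (Iic (c * (P * θ * y + 1))) ∂(gammaMeasure D 1) := by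
    have hpre : {ω | G₁ ω ≤ c * (P * θ * G₂ ω + 1)}
        = (fun ω => (G₂ ω, G₁ ω)) ⁻¹' {p : ℝ × ℝ | p.2 ≤ c * (P * θ * p.1 + 1)} := rfl
    rw [hpre, ← Measure.map_apply (hG₂.prodMk hG₁) hS, hmap, hdist₁, hdist₂,
      Measure.prod_apply hS]
    rfl
  rw [hμB]
  -- exponential CDF
  have hεIic : ∀ t : ℝ, 0 ≤ t → expMeasure 1 (Iic t) = ENNReal.ofReal (1 - exp (-t)) := by
    intro t ht
    rw [expMeasure, gammaMeasure, withDensity_apply _ measurableSet_Iic]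
    have h : ∫⁻ y in Iic t, gammaPDF 1 1 y = ∫⁻ y in Iic t, exponentialPDF 1 y := rfl
    rw [h, lintegral_exponentialPDF_eq_antiDeriv one_pos, if_pos ht, one_mul]
  have humeas : Measurable fun y : ℝ => ENNReal.ofReal (exp (-(c * (P * θ * y + 1)))) := by
    fun_prop
  have hint1 : ∫⁻ y, expMeasure 1 (Iic (c * (P * θ * y + 1))) ∂(gammaMeasure D 1)
      = ∫⁻ y, (1 - ENNReal.ofReal (exp (-(c * (P * θ * y + 1))))) ∂(gammaMeasure D 1) := by
    apply lintegral_congr_ae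
    filter_upwards [hγae] with y hy
    rw [hεIic _ (by positivity), ENNReal.ofReal_sub _ (exp_nonneg _), ENNReal.ofReal_one]
  have hule : (fun y : ℝ => ENNReal.ofReal (exp (-(c * (P * θ * y + 1)))))
      ≤ᵐ[gammaMeasure D 1] fun _ => (1 : ENNReal) := by
    filter_upwards [hγae] with y hy
    rw [← ENNReal.ofReal_one]
    exact ENNReal.ofReal_le_ofReal (exp_le_one_iff.mpr (neg_nonpos.mpr (by positivity)))
  have hL_le : ∫⁻ y, ENNReal.ofReal (exp (-(c * (P * θ * y + 1)))) ∂(gammaMeasure D 1) ≤ 1 := by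
    calc ∫⁻ y, ENNReal.ofReal (exp (-(c * (P * θ * y + 1)))) ∂(gammaMeasure D 1)
        ≤ ∫⁻ _, (1 : ENNReal) ∂(gammaMeasure D 1) := lintegral_mono_ae hule
      _ = 1 := by simp
  rw [hint1, lintegral_sub humeas (lt_of_le_of_lt hL_le ENNReal.one_lt_top).ne hule,
    lintegral_one, measure_univ]
  -- compute L as an integral over Ioi 0
  have hgp_meas : Measurable (gammaPDF D 1) := (measurable_gammaPDFReal D 1).ennreal_ofReal
  have hL : ∫⁻ y, ENNReal.ofReal (exp (-(c * (P * θ * y + 1)))) ∂(gammaMeasure D 1)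
      = ∫⁻ y in Ioi 0, ENNReal.ofReal
          (exp (-c) / Gamma D * (y ^ (D - 1) * exp (-((1 + c * (P * θ)) * y)))) := by
    rw [gammaMeasure, lintegral_withDensity_eq_lintegral_mul _ hgp_meas humeas,
      ← lintegral_add_compl _ (measurableSet_Iic (a := (0:ℝ))), compl_Iic]
    have h0 : ∫⁻ y in Iic (0:ℝ),
        (gammaPDF D 1 * fun y => ENNReal.ofReal (exp (-(c * (P * θ * y + 1))))) y = 0 := by
      rw [setLIntegral_congr (Iio_ae_eq_Iic (a := (0:ℝ))).symm,
        setLIntegral_congr_fun_ae (g := fun _ => (0:ENNReal)) measurableSet_Iio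
          (ae_of_all _ (fun y (hy : y < 0) => by
            simp [Pi.mul_apply, gammaPDF_of_neg hy])), lintegral_zero]
    rw [h0, zero_add]
    apply setLIntegral_congr_fun_ae measurableSet_Ioi
    apply ae_of_all
    intro y hy
    have hy0 : (0:ℝ) < y := hy
    simp only [Pi.mul_apply]
    rw [gammaPDF_of_nonneg hy0.le, ← ENNReal.ofReal_mul (by positivity)]
    congr 1
    have hexp : exp (-(1 * y)) * exp (-(c * (P * θ * y + 1)))
        = exp (-c) * exp (-((1 + c * (P * θ)) * y)) := by
      rw [← exp_add, ← exp_add]; congr 1; ring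
    rw [mul_assoc, hexp, Real.one_rpow]
    ring
  rw [hL]
  -- convert to a Bochner integral and evaluate
  have hg_meas : Measurable fun y : ℝ =>
      exp (-c) / Gamma D * (y ^ (D - 1) * exp (-((1 + c * (P * θ)) * y))) := by
    fun_prop
  have hnonneg : 0 ≤ᵐ[volume.restrict (Ioi (0:ℝ))] fun y : ℝ =>
      exp (-c) / Gamma D * (y ^ (D - 1) * exp (-((1 + c * (P * θ)) * y))) := by
    rw [Filter.EventuallyLE, ae_restrict_iff' measurableSet_Ioi]
    exact ae_of_all _ fun y (hy : 0 < y) => by positivity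
  have htoReal : (∫⁻ y in Ioi (0:ℝ), ENNReal.ofReal
        (exp (-c) / Gamma D * (y ^ (D - 1) * exp (-((1 + c * (P * θ)) * y))))).toReal
      = ∫ y in Ioi (0:ℝ), exp (-c) / Gamma D * (y ^ (D - 1) * exp (-((1 + c * (P * θ)) * y))) :=
    (integral_eq_lintegral_of_nonneg_ae hnonneg hg_meas.aestronglyMeasurable.restrict).symm
  have hIg : ∫ y in Ioi (0:ℝ), exp (-c) / Gamma D * (y ^ (D - 1) * exp (-((1 + c * (P * θ)) * y)))
      = exp (-c) / Gamma D * ((1 / (1 + c * (P * θ))) ^ D * Gamma D) := by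
    rw [integral_const_mul, integral_rpow_mul_exp_neg_mul_Ioi hD h1s]
  rw [ENNReal.toReal_sub_of_le (hL ▸ hL_le) ENNReal.one_ne_top, ENNReal.toReal_one,
    htoReal, hIg]
  -- final arithmetic
  have hΓ : Gamma D ≠ 0 := (Gamma_pos_of_pos hD).ne'
  have hbase : (θ / α) * x + 1 = 1 + c * (P * θ) := by
    rw [hc]; field_simp; ring
  have hbpos : (0:ℝ) < (θ / α) * x + 1 := by rw [hbase]; exact h1s
  rw [hbase, one_div, Real.inv_rpow h1s.le]
  have h1spow : (0:ℝ) < (1 + c * (P * θ)) ^ D := Real.rpow_pos_of_pos h1s D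
  field_simp
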